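/- Let T ≥ 1 be a natural number and let a, b be real numbers such that the complex polynomial map F(z) = z + a·z^{T+1} + b·z^{2T+1} is injective on the open unit disk {z ∈ ℂ : |z| < 1}. Then |1 - a + b| ≥ ((1 - sin(π/(2+2T)))/cos(π/(2+2T)))^2 · |1 + a + b|; equivalently, |F(e^{iπ/T})| ≥ ((1 - sin(π/(2+2T)))/cos(π/(2+2T)))^2 · |F(1)|. -/

import Mathlib

open Real


lemma int_cos_nat (m : ℕ) (hm : m ≠ 0) : ∫ x in (0:ℝ)..π, Real.cos (m * x) = 0 := by
  have h : (m:ℝ) ≠ 0 := Nat.cast_ne_zero.mpr hm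
  rw [intervalIntegral.integral_comp_mul_left (fun x => Real.cos x) h]
  simp [Real.sin_nat_mul_pi]

lemma sin_orth (k : ℕ) (hk : 2 ≤ k) : ∫ x in (0:ℝ)..π, Real.sin (k * x) * Real.sin x = 0 := by
  have heq : ∀ x : ℝ, Real.sin (k * x) * Real.sin x
      = (Real.cos ((k-1 : ℕ) * x) - Real.cos ((k+1 : ℕ) * x)) / 2 := by
    intro x
    have h1 : ((k-1:ℕ):ℝ) * x = k * x - x := by
      push_cast [Nat.cast_sub (by omega : 1 ≤ k)]; ring
    have h2 : ((k+1:ℕ):ℝ) * x = k * x + x := by push_cast; ring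
    rw [h1, h2, Real.cos_sub, Real.cos_add]; ring
  simp only [heq]
  rw [intervalIntegral.integral_div]
  rw [intervalIntegral.integral_sub (by apply Continuous.intervalIntegrable; fun_prop)
    (by apply Continuous.intervalIntegrable; fun_prop)]
  rw [int_cos_nat (k-1) (by omega), int_cos_nat (k+1) (by omega)]
  norm_num

lemma im_F (a b r α : ℝ) (T : ℕ) :
    (((r:ℂ) * Complex.exp (α * Complex.I)) + (a:ℂ) * ((r:ℂ) * Complex.exp (α * Complex.I))^(T+1)
      + (b:ℂ) * ((r:ℂ) * Complex.exp (α * Complex.I))^(2*T+1)).im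
    = r * Real.sin α + a * r^(T+1) * Real.sin ((T+1)*α) + b * r^(2*T+1) * Real.sin ((2*T+1)*α) := by
  have hp : ∀ k : ℕ, ((r:ℂ) * Complex.exp (α * Complex.I))^k
      = ((r^k : ℝ) : ℂ) * Complex.exp (((k*α : ℝ)) * Complex.I) := by
    intro k
    rw [mul_pow, ← Complex.exp_nat_mul]
    push_cast
    ring_nf
  rw [hp (T+1), hp (2*T+1)]
  simp only [Complex.add_im, Complex.mul_im, Complex.ofReal_re, Complex.ofReal_im,
    Complex.exp_ofReal_mul_I_im, Complex.exp_ofReal_mul_I_re]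
  push_cast
  ring

lemma key_lemma (T : ℕ) (hT : 1 ≤ T) (a b : ℝ)
    (hinj : Set.InjOn (fun z : ℂ => z + (a : ℂ) * z^(T+1) + (b : ℂ) * z^(2*T+1))
      (Metric.ball (0 : ℂ) 1)) :
    a ≥ -(1+b) * Real.sin (π / (2 + 2*(T:ℝ))) := by
  set θ := π / (2 + 2*(T:ℝ)) with hθdef
  have hTpos : (0:ℝ) < (T:ℝ) := by exact_mod_cast hT
  have hden : (0:ℝ) < 2 + 2*(T:ℝ) := by linarith
  have hθpos : 0 < θ := div_pos Real.pi_pos hden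
  have hθlt : θ < π := by
    rw [hθdef, div_lt_iff₀ hden]
    nlinarith [Real.pi_pos]
  -- the trig polynomial
  set g : ℝ → ℝ → ℝ := fun r α =>
    Real.sin α + a * r^T * Real.sin (((T:ℝ)+1)*α) + b * r^(2*T) * Real.sin ((2*(T:ℝ)+1)*α)
    with hgdef
  -- Step 1: nonvanishing
  have step1 : ∀ r ∈ Set.Ioo (0:ℝ) 1, ∀ α ∈ Set.Ioo (0:ℝ) π, g r α ≠ 0 := by
    rintro r ⟨hr0, hr1⟩ α ⟨hα0, hαπ⟩ hzero
    set z : ℂ := (r:ℂ) * Complex.exp (α * Complex.I) with hz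
    have habs : ‖z‖ = r := by
      rw [hz, norm_mul, Complex.norm_exp]
      simp [abs_of_pos hr0]
    have hzball : z ∈ Metric.ball (0:ℂ) 1 := by
      simp [Complex.dist_eq, habs, hr1]
    have hzcball : (starRingEnd ℂ) z ∈ Metric.ball (0:ℂ) 1 := by
      simp [Complex.dist_eq, Complex.norm_conj, habs, hr1]
    have him : (z + (a:ℂ) * z^(T+1) + (b:ℂ) * z^(2*T+1)).im = 0 := by
      rw [hz, im_F]
      have : r * Real.sin α + a * r ^ (T + 1) * Real.sin (((T:ℝ) + 1) * α) +
          b * r ^ (2 * T + 1) * Real.sin ((2 * (T:ℝ) + 1) * α) = r * g r α := by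
        rw [hgdef]
        push_cast
        ring
      rw [this, hzero, mul_zero]
    have hconjF : ((starRingEnd ℂ) z + (a:ℂ) * ((starRingEnd ℂ) z)^(T+1)
        + (b:ℂ) * ((starRingEnd ℂ) z)^(2*T+1))
        = (starRingEnd ℂ) (z + (a:ℂ) * z^(T+1) + (b:ℂ) * z^(2*T+1)) := by
      simp [map_add, map_mul, map_pow, Complex.conj_ofReal]
    have hreal : (starRingEnd ℂ) (z + (a:ℂ) * z^(T+1) + (b:ℂ) * z^(2*T+1))
        = z + (a:ℂ) * z^(T+1) + (b:ℂ) * z^(2*T+1) :=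
      Complex.conj_eq_iff_im.mpr him
    have heq : (starRingEnd ℂ) z = z := by
      apply hinj hzcball hzball
      simp only
      rw [hconjF, hreal]
    have : z.im = 0 := by
      have := congrArg Complex.im heq
      simpa [Complex.conj_im] using by linarith [congrArg Complex.im heq, Complex.conj_im z]
    have hzim : z.im = r * Real.sin α := by
      rw [hz]
      simp [Complex.mul_im, Complex.exp_ofReal_mul_I_im, Complex.exp_ofReal_mul_I_re]
    rw [hzim] at this
    have hsin : 0 < Real.sin α := Real.sin_pos_of_pos_of_lt_pi hα0 hαπ
    nlinarith
  -- Step 2: positivity somewhere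
  have step2 : ∀ r ∈ Set.Ioo (0:ℝ) 1, ∃ α ∈ Set.Ioo (0:ℝ) π, 0 < g r α := by
    rintro r hr
    by_contra hcon
    push_neg at hcon
    have hint : (∫ x in (0:ℝ)..π, g r x * Real.sin x) = π / 2 := by
      have hcont1 : IntervalIntegrable (fun x => Real.sin x * Real.sin x) MeasureTheory.volume 0 π := by
        apply Continuous.intervalIntegrable; fun_prop
      have hcont2 : IntervalIntegrable (fun x => a * r^T * (Real.sin (((T:ℝ)+1)*x) * Real.sin x)) MeasureTheory.volume 0 π := by
        apply Continuous.intervalIntegrable; fun_prop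
      have hcont3 : IntervalIntegrable (fun x => b * r^(2*T) * (Real.sin ((2*(T:ℝ)+1)*x) * Real.sin x)) MeasureTheory.volume 0 π := by
        apply Continuous.intervalIntegrable; fun_prop
      have : (fun x => g r x * Real.sin x) = fun x =>
          Real.sin x * Real.sin x + (a * r^T * (Real.sin (((T:ℝ)+1)*x) * Real.sin x)
            + b * r^(2*T) * (Real.sin ((2*(T:ℝ)+1)*x) * Real.sin x)) := by
        funext x; rw [hgdef]; ring
      rw [this, intervalIntegral.integral_add hcont1 (hcont2.add hcont3),
        intervalIntegral.integral_add hcont2 hcont3,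
        intervalIntegral.integral_const_mul, intervalIntegral.integral_const_mul]
      have h1 : (∫ x in (0:ℝ)..π, Real.sin x * Real.sin x) = π/2 := by
        have : (fun x => Real.sin x * Real.sin x) = fun x => Real.sin x ^ 2 := by
          funext x; ring
        rw [this, integral_sin_sq]
        simp [Real.sin_pi]
      have h2 : (∫ x in (0:ℝ)..π, Real.sin (((T:ℝ)+1)*x) * Real.sin x) = 0 := by
        have := sin_orth (T+1) (by omega)
        have hc : ((T+1:ℕ):ℝ) = (T:ℝ)+1 := by push_cast; ring
        rwa [hc] at this
      have h3 : (∫ x in (0:ℝ)..π, Real.sin ((2*(T:ℝ)+1)*x) * Real.sin x) = 0 := by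
        have := sin_orth (2*T+1) (by omega)
        have hc : ((2*T+1:ℕ):ℝ) = 2*(T:ℝ)+1 := by push_cast; ring
        rwa [hc] at this
      rw [h1, h2, h3]
      ring
    have hle : (∫ x in (0:ℝ)..π, g r x * Real.sin x) ≤ 0 := by
      have hneg : 0 ≤ ∫ x in (0:ℝ)..π, -(g r x * Real.sin x) := by
        apply intervalIntegral.integral_nonneg Real.pi_pos.le
        intro x hx
        rw [neg_nonneg]
        rcases eq_or_lt_of_le hx.1 with h0 | h0
        · simp [hgdef, ← h0]
        rcases eq_or_lt_of_le hx.2 with hπ | hπ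
        · simp [hgdef, hπ, Real.sin_pi]
        have hs : 0 ≤ Real.sin x := Real.sin_nonneg_of_nonneg_of_le_pi hx.1 hx.2
        exact mul_nonpos_of_nonpos_of_nonneg (hcon x ⟨h0, hπ⟩) hs
      rw [intervalIntegral.integral_neg] at hneg
      linarith
    rw [hint] at hle
    linarith [Real.pi_pos]
  -- Step 3: positivity everywhere
  have step3 : ∀ r ∈ Set.Ioo (0:ℝ) 1, ∀ α ∈ Set.Ioo (0:ℝ) π, 0 < g r α := by
    rintro r hr α hα
    rcases step2 r hr with ⟨α₀, hα₀, hgα₀⟩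
    rcases lt_or_gt_of_ne (step1 r hr α hα) with hneg | hpos
    · exfalso
      have hcont : ContinuousOn (g r) (Set.uIcc α α₀) := by
        apply Continuous.continuousOn
        rw [hgdef]; fun_prop
      have h0mem : (0:ℝ) ∈ Set.uIcc (g r α) (g r α₀) :=
        Set.mem_uIcc.mpr (Or.inl ⟨le_of_lt hneg, le_of_lt hgα₀⟩)
      rcases intermediate_value_uIcc hcont h0mem with ⟨c, hc, hgc⟩
      have hcmem : c ∈ Set.Ioo (0:ℝ) π := by
        rcases Set.mem_uIcc.mp hc with ⟨h1, h2⟩ | ⟨h1, h2⟩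
        · exact ⟨lt_of_lt_of_le hα.1 h1, lt_of_le_of_lt h2 hα₀.2⟩
        · exact ⟨lt_of_lt_of_le hα₀.1 h1, lt_of_le_of_lt h2 hα.2⟩
      exact step1 r hr c hcmem hgc
    · exact hpos
  -- Step 4: evaluate at θ
  have hsinθ1 : Real.sin (((T:ℝ)+1)*θ) = 1 := by
    have : ((T:ℝ)+1)*θ = π/2 := by
      rw [hθdef]
      field_simp
      ring
    rw [this, Real.sin_pi_div_two]
  have hsinθ2 : Real.sin ((2*(T:ℝ)+1)*θ) = Real.sin θ := by
    have : (2*(T:ℝ)+1)*θ = π - θ := by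
      rw [hθdef]
      field_simp
      ring
    rw [this, Real.sin_pi_sub]
  have step4 : ∀ r ∈ Set.Ioo (0:ℝ) 1,
      0 < Real.sin θ + a * r^T + b * r^(2*T) * Real.sin θ := by
    intro r hr
    have := step3 r hr θ ⟨hθpos, hθlt⟩
    rw [hgdef] at this
    simp only [hsinθ1, hsinθ2] at this
    linarith [this]
  -- Step 5: pass to the limit r → 1⁻
  have hlim : Filter.Tendsto (fun r : ℝ => Real.sin θ + a * r^T + b * r^(2*T) * Real.sin θ)
      (nhdsWithin 1 (Set.Ioo (0:ℝ) 1)) (nhds (Real.sin θ + a + b * Real.sin θ)) := by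
    have hc : Continuous (fun r : ℝ => Real.sin θ + a * r^T + b * r^(2*T) * Real.sin θ) := by
      fun_prop
    have h1 := (hc.tendsto 1).mono_left (nhdsWithin_le_nhds (s := Set.Ioo (0:ℝ) 1))
    have h2 : Real.sin θ + a * (1:ℝ)^T + b * (1:ℝ)^(2*T) * Real.sin θ
        = Real.sin θ + a + b * Real.sin θ := by norm_num
    rwa [h2] at h1
  have hne : (nhdsWithin (1:ℝ) (Set.Ioo (0:ℝ) 1)).NeBot := by
    apply mem_closure_iff_nhdsWithin_neBot.mp
    rw [closure_Ioo (by norm_num : (0:ℝ) ≠ 1)]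
    exact ⟨by norm_num, le_refl 1⟩
  have hfinal : 0 ≤ Real.sin θ + a + b * Real.sin θ := by
    apply ge_of_tendsto hlim
    filter_upwards [self_mem_nhdsWithin] with r hr
    exact (step4 r hr).le
  linarith


lemma rot_inj (T : ℕ) (hT : 1 ≤ T) (a b : ℝ)
    (hinj : Set.InjOn (fun z : ℂ => z + (a : ℂ) * z^(T+1) + (b : ℂ) * z^(2*T+1))
      (Metric.ball (0 : ℂ) 1)) :
    Set.InjOn (fun z : ℂ => z + ((-a : ℝ) : ℂ) * z^(T+1) + (b : ℂ) * z^(2*T+1))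
      (Metric.ball (0 : ℂ) 1) := by
  set u : ℂ := Complex.exp ((π/(T:ℝ) : ℝ) * Complex.I) with hu
  have hT0 : (T:ℂ) ≠ 0 := by exact_mod_cast Nat.cast_ne_zero.mpr (by omega)
  have huT : u^T = -1 := by
    rw [hu, ← Complex.exp_nat_mul]
    have : (T:ℂ) * (((π/(T:ℝ) : ℝ) : ℂ) * Complex.I) = (π:ℂ) * Complex.I := by
      push_cast
      field_simp
    rw [this, Complex.exp_pi_mul_I]
  have huabs : ‖u‖ = 1 := by
    rw [hu, Complex.norm_exp]
    simp
  have hune : u ≠ 0 := by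
    intro h; rw [h] at huabs; simp at huabs
  have hkey : ∀ w : ℂ, (u*w) + (a:ℂ) * (u*w)^(T+1) + (b:ℂ) * (u*w)^(2*T+1)
      = u * (w + ((-a:ℝ):ℂ) * w^(T+1) + (b:ℂ) * w^(2*T+1)) := by
    intro w
    have h1 : u^(T+1) = -u := by rw [pow_succ, huT]; ring
    have h2 : u^(2*T+1) = u := by
      rw [show 2*T+1 = T+(T+1) by ring, pow_add, huT, h1]; ring
    rw [mul_pow, mul_pow, h1, h2]
    push_cast
    ring
  intro w1 h1 w2 h2 heq
  have hb : ∀ w : ℂ, w ∈ Metric.ball (0:ℂ) 1 → u * w ∈ Metric.ball (0:ℂ) 1 := by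
    intro w hw
    simp only [Metric.mem_ball, Complex.dist_eq, sub_zero] at hw ⊢
    rw [norm_mul, huabs, one_mul]
    exact hw
  have := hinj (hb w1 h1) (hb w2 h2) (by
    simp only
    rw [hkey, hkey]
    simp only at heq
    rw [heq])
  exact mul_left_cancel₀ hune this

theorem contraction_bound_of_injOn (T : ℕ) (hT : 1 ≤ T) (a b : ℝ)
    (hinj : Set.InjOn (fun z : ℂ => z + (a : ℂ) * z^(T+1) + (b : ℂ) * z^(2*T+1))
      (Metric.ball (0 : ℂ) 1)) :
    |1 - a + b| ≥ ((1 - Real.sin (π / (2 + 2*(T:ℝ)))) / Real.cos (π / (2 + 2*(T:ℝ))))^2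
        * |1 + a + b| ∧
    ‖(fun z : ℂ => z + (a : ℂ) * z^(T+1) + (b : ℂ) * z^(2*T+1))
        (Complex.exp (Complex.I * π / (T:ℂ)))‖
      ≥ ((1 - Real.sin (π / (2 + 2*(T:ℝ)))) / Real.cos (π / (2 + 2*(T:ℝ))))^2
        * ‖(fun z : ℂ => z + (a : ℂ) * z^(T+1) + (b : ℂ) * z^(2*T+1)) 1‖ := by
  have hTpos : (0:ℝ) < (T:ℝ) := by exact_mod_cast hT
  have hT1 : (1:ℝ) ≤ (T:ℝ) := by exact_mod_cast hT
  set θ := π / (2 + 2*(T:ℝ)) with hθdef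
  set s := Real.sin θ with hsdef
  have hden : (0:ℝ) < 2 + 2*(T:ℝ) := by linarith
  have hθpos : 0 < θ := div_pos Real.pi_pos hden
  have hθlt : θ < π/2 := by
    rw [hθdef, div_lt_iff₀ hden]
    nlinarith [Real.pi_pos]
  have hs0 : 0 < s := Real.sin_pos_of_pos_of_lt_pi hθpos (by linarith [Real.pi_pos])
  have hcos : 0 < Real.cos θ := Real.cos_pos_of_mem_Ioo ⟨by linarith, hθlt⟩
  have hpyth := Real.sin_sq_add_cos_sq θ
  have hs1 : s < 1 := by nlinarith
  -- coefficient bounds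
  have ha1 : a ≥ -(1+b) * s := key_lemma T hT a b hinj
  have ha2 : -a ≥ -(1+b) * s := key_lemma T hT (-a) b (rot_inj T hT a b hinj)
  have hb1 : 0 ≤ 1 + b := by nlinarith
  have habs_a : |a| ≤ (1+b) * s := abs_le.mpr ⟨by linarith, by linarith⟩
  -- the constant
  have hconst : ((1 - s) / Real.cos θ)^2 = (1-s)/(1+s) := by
    rw [div_pow]
    have hcos2 : Real.cos θ^2 = (1-s)*(1+s) := by nlinarith
    rw [hcos2, sq]
    rw [mul_div_mul_left _ _ (by linarith : (1:ℝ)-s ≠ 0)]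
  -- sign facts
  have hnn1 : 0 ≤ 1 - a + b := by nlinarith [abs_le.mp habs_a]
  have hnn2 : 0 ≤ 1 + a + b := by nlinarith [abs_le.mp habs_a]
  have hmain : |1 - a + b| ≥ ((1 - s) / Real.cos θ)^2 * |1 + a + b| := by
    rw [hconst, abs_of_nonneg hnn1, abs_of_nonneg hnn2, ge_iff_le,
      div_mul_eq_mul_div, div_le_iff₀ (by linarith : (0:ℝ) < 1 + s)]
    nlinarith [abs_le.mp habs_a]
  refine ⟨hmain, ?_⟩
  -- second conjunct
  have hT0 : (T:ℂ) ≠ 0 := Nat.cast_ne_zero.mpr (by omega)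
  set v : ℂ := Complex.exp (Complex.I * π / (T:ℂ)) with hv
  have hvT : v^T = -1 := by
    rw [hv, ← Complex.exp_nat_mul]
    have : (T:ℂ) * (Complex.I * π / (T:ℂ)) = (π:ℂ) * Complex.I := by
      field_simp
    rw [this, Complex.exp_pi_mul_I]
  have hvabs : ‖v‖ = 1 := by
    rw [hv, Complex.norm_exp]
    have : (Complex.I * π / (T:ℂ)).re = 0 := by
      simp [Complex.div_re, Complex.mul_re]
    rw [this, Real.exp_zero]
  have h1 : v^(T+1) = -v := by rw [pow_succ, hvT]; ring
  have h2 : v^(2*T+1) = v := by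
    rw [show 2*T+1 = T+(T+1) by ring, pow_add, hvT, h1]; ring
  have hFv : v + (a:ℂ) * v^(T+1) + (b:ℂ) * v^(2*T+1) = v * ((1 - a + b : ℝ) : ℂ) := by
    rw [h1, h2]; push_cast; ring
  have hF1 : (1:ℂ) + (a:ℂ) * 1^(T+1) + (b:ℂ) * 1^(2*T+1) = ((1 + a + b : ℝ) : ℂ) := by
    push_cast; ring
  simp only
  rw [hFv, hF1, norm_mul, hvabs, one_mul, Complex.norm_real, Complex.norm_real, Real.norm_eq_abs,
    Real.norm_eq_abs]
  exact hmain
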